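/- arXiv:0801.0718 — 7 statements merged into one kernel-verified Lean document; each statement's English description precedes it below -/
import Mathlib

section
/- Let X be a progressively measurable càdlàg real-valued process on a filtered probability space satisfying the usual hypotheses. If X is sticky, then for every a.s. bounded stopping time τ, every event A ∈ F_τ with P(A) > 0, every ε > 0, and every real T with τ ≤ T almost surely, one has P(A ∩ {sup_{t ∈ [τ,T]} |X_τ − X_t| < ε}) > 0. -/
open MeasureTheory Filter Set Topology
open scoped NNReal ENNReal

/-- A real-valued process indexed by `ℝ≥0` is càdlàg: every path is right-continuous
and has a left limit at every positive time. -/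
def IsCadlag {Ω : Type*} (X : ℝ≥0 → Ω → ℝ) : Prop :=
  ∀ ω, (∀ t : ℝ≥0, ContinuousWithinAt (fun s => X s ω) (Set.Ici t) t) ∧
    ∀ t : ℝ≥0, 0 < t → ∃ l : ℝ,
      Filter.Tendsto (fun s => X s ω) (nhdsWithin t (Set.Iio t)) (nhds l)

/-- A process `X` is sticky with respect to the filtration `𝓕` and the measure `P` if
for all `ε > 0`, all `T > 0` and all stopping times `τ` with `P(τ < T) > 0`, we have
`P(sup_{t ∈ [τ, T]} |X_τ - X_t| < ε, τ < T) > 0`. -/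
def Sticky {Ω : Type*} {m : MeasurableSpace Ω} (𝓕 : MeasureTheory.Filtration ℝ≥0 m)
    (P : MeasureTheory.Measure Ω) (X : ℝ≥0 → Ω → ℝ) : Prop :=
  ∀ ε : ℝ, 0 < ε → ∀ T : ℝ≥0, 0 < T → ∀ τ : Ω → ℝ≥0,
    MeasureTheory.IsStoppingTime 𝓕 (fun ω => (τ ω : WithTop ℝ≥0)) → 0 < P {ω | τ ω < T} →
    0 < P ({ω | (⨆ t ∈ Set.Icc (τ ω) T, |X (τ ω) ω - X t ω|) < ε} ∩ {ω | τ ω < T})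

/-- If a progressively measurable càdlàg process `X` on a filtered probability space
satisfying the usual hypotheses is sticky, then for every a.s. bounded stopping time `τ`,
every `A ∈ F_τ` with `P(A) > 0`, every `ε > 0` and every `T` with `τ ≤ T` a.s., we have
`P(A ∩ {sup_{t ∈ [τ, T]} |X_τ - X_t| < ε}) > 0`. -/
theorem sticky_of_a_implies_b {Ω : Type*} {m : MeasurableSpace Ω}
    (𝓕 : MeasureTheory.Filtration ℝ≥0 m) (P : MeasureTheory.Measure Ω)
    [MeasureTheory.IsProbabilityMeasure P] [P.IsComplete]
    (hRC : ∀ t : ℝ≥0, (𝓕 t : MeasurableSpace Ω)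
      = ⨅ s : ℝ≥0, ⨅ _ : t < s, (𝓕 s : MeasurableSpace Ω))
    (hNull : ∀ N : Set Ω, MeasurableSet N → P N = 0 → MeasurableSet[𝓕 0] N)
    (X : ℝ≥0 → Ω → ℝ) (hprog : MeasureTheory.ProgMeasurable 𝓕 X) (hcadlag : IsCadlag X)
    (hsticky : Sticky 𝓕 P X)
    (τ : Ω → ℝ≥0) (hτ : MeasureTheory.IsStoppingTime 𝓕 (fun ω => (τ ω : WithTop ℝ≥0)))
    (hτbdd : ∃ C : ℝ≥0, ∀ᵐ ω ∂P, τ ω ≤ C)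
    (A : Set Ω) (hA : MeasurableSet[hτ.measurableSpace] A) (hApos : 0 < P A)
    (ε : ℝ) (hε : 0 < ε) (T : ℝ≥0) (hτT : ∀ᵐ ω ∂P, τ ω ≤ T) :
    0 < P (A ∩ {ω | (⨆ t ∈ Set.Icc (τ ω) T, |X (τ ω) ω - X t ω|) < ε}) := by
  classical
  set B : Set Ω := A ∩ {ω | τ ω < T} with hB
  by_cases hPB : P B = 0
  · -- a.e. on A, τ ω = T, so the sup is 0 < ε
    have hsup : ∀ ω, τ ω = T → (⨆ t ∈ Set.Icc (τ ω) T, |X (τ ω) ω - X t ω|) < ε := by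
      intro ω hωT
      have h0 : (⨆ t ∈ Set.Icc (τ ω) T, |X (τ ω) ω - X t ω|) ≤ 0 := by
        refine Real.iSup_le (fun t => Real.iSup_le (fun ht => ?_) le_rfl) le_rfl
        have htT : t = T := le_antisymm ht.2 (hωT ▸ ht.1)
        simp [htT, hωT]
      linarith
    have hsub : A ⊆ (A ∩ {ω | (⨆ t ∈ Set.Icc (τ ω) T, |X (τ ω) ω - X t ω|) < ε}) ∪ B
        ∪ {ω | ¬ τ ω ≤ T} := by
      intro ω hω
      by_cases h1 : τ ω ≤ T
      · by_cases h2 : τ ω < T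
        · exact Or.inl (Or.inr ⟨hω, h2⟩)
        · exact Or.inl (Or.inl ⟨hω, hsup ω (le_antisymm h1 (not_lt.mp h2))⟩)
      · exact Or.inr h1
    have hN : P {ω | ¬ τ ω ≤ T} = 0 := by
      rw [← MeasureTheory.ae_iff] at *
      exact hτT
    have hle : P A ≤ P (A ∩ {ω | (⨆ t ∈ Set.Icc (τ ω) T, |X (τ ω) ω - X t ω|) < ε}) + P B
        + P {ω | ¬ τ ω ≤ T} :=
      (measure_mono hsub).trans ((measure_union_le _ _).trans
        (add_le_add (measure_union_le _ _) le_rfl))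
    rw [hPB, hN, add_zero, add_zero] at hle
    exact lt_of_lt_of_le hApos hle
  · -- positive probability that τ < T on A
    have hPBpos : 0 < P B := pos_iff_ne_zero.mpr hPB
    obtain ⟨ω₀, hω₀⟩ := MeasureTheory.nonempty_of_measure_ne_zero hPB
    have hT : (0 : ℝ≥0) < T := lt_of_le_of_lt zero_le hω₀.2
    set σ : Ω → ℝ≥0 := fun ω => if ω ∈ B then τ ω else T with hσdef
    have hσB : ∀ ω ∈ B, σ ω = τ ω := fun ω hω => if_pos hω
    have hσlt : {ω | σ ω < T} = B := by
      ext ω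
      by_cases hωB : ω ∈ B
      · simp only [Set.mem_setOf_eq, hσB ω hωB]
        exact ⟨fun _ => hωB, fun _ => hωB.2⟩
      · simp only [Set.mem_setOf_eq, hσdef, if_neg hωB]
        exact ⟨fun h => absurd rfl (ne_of_lt h), fun h => absurd h hωB⟩
    have hσ : MeasureTheory.IsStoppingTime 𝓕 (fun ω => (σ ω : WithTop ℝ≥0)) := by
      intro t
      simp only [WithTop.coe_le_coe]
      by_cases hTt : T ≤ t
      · have huniv : {ω | σ ω ≤ t} = Set.univ := by
          refine Set.eq_univ_of_forall fun ω => ?_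
          by_cases hωB : ω ∈ B
          · exact le_trans (le_of_lt ((hσB ω hωB) ▸ hωB.2)) hTt
          · simpa [hσdef, if_neg hωB] using hTt
        rw [huniv]
        exact MeasurableSet.univ
      · push_neg at hTt
        have hset : {ω | σ ω ≤ t} = A ∩ {ω | τ ω ≤ t} := by
          ext ω
          by_cases hωB : ω ∈ B
          · simp only [Set.mem_setOf_eq, hσB ω hωB, Set.mem_inter_iff]
            exact ⟨fun h => ⟨hωB.1, h⟩, fun h => h.2⟩
          · simp only [Set.mem_setOf_eq, hσdef, if_neg hωB, Set.mem_inter_iff]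
            constructor
            · intro h; exact absurd h (not_le.mpr hTt)
            · intro h; exact absurd ⟨h.1, lt_of_le_of_lt h.2 hTt⟩ hωB
        rw [hset]
        have h := ((hτ.measurableSet A).mp hA).2 t
        simp only [WithTop.coe_le_coe] at h
        exact h
    have hpos : 0 < P {ω | σ ω < T} := by rwa [hσlt]
    have hmain := hsticky ε hε T hT σ hσ hpos
    refine lt_of_lt_of_le hmain (measure_mono ?_)
    rintro ω ⟨hs, hl⟩
    have hωB : ω ∈ B := hσlt ▸ hl
    have hστ : σ ω = τ ω := hσB ω hωB
    rw [Set.mem_setOf_eq, hστ] at hs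
    exact ⟨hωB.1, hs⟩
end

section
/- Let X be a progressively measurable càdlàg real-valued process on a filtered probability space satisfying the usual hypotheses. Suppose that for every a.s. bounded stopping time τ, every A ∈ F_τ with P(A) > 0, every ε > 0, and every real T with τ ≤ T a.s., one has P(A ∩ {sup_{t ∈ [τ,T]} |X_τ − X_t| < ε}) > 0. Then for every a.s. bounded stopping time τ₀ and every δ > 0, the stopping time τ₁ = inf{t ≥ τ₀ : |X_t − X_{τ₀}| > δ} is unbounded on every A ∈ F_{τ₀} with P(A) > 0, i.e., for every real M one has P(A ∩ {τ₁ > M}) > 0. -/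
open MeasureTheory Filter Set Topology
open scoped NNReal ENNReal

/-- The first time after the stopping time `τ₀` at which the process `X` moves away from
`X_{τ₀}` by more than `δ`, with the convention `inf ∅ = +∞`. -/
noncomputable def hitTime {Ω : Type*} (X : ℝ≥0 → Ω → ℝ) (τ₀ : Ω → ℝ≥0) (δ : ℝ) (ω : Ω) : ℝ≥0∞ :=
  sInf ((fun u : ℝ≥0 => (u : ℝ≥0∞)) ''
    {u : ℝ≥0 | τ₀ ω ≤ u ∧ δ < |X u ω - X (τ₀ ω) ω|})

lemma cadlag_bounded (g : ℝ≥0 → ℝ)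
    (hr : ∀ t : ℝ≥0, ContinuousWithinAt g (Set.Ici t) t)
    (hl : ∀ t : ℝ≥0, 0 < t → ∃ l : ℝ, Filter.Tendsto g (nhdsWithin t (Set.Iio t)) (nhds l))
    (a b : ℝ≥0) : ∃ B : ℝ, ∀ s ∈ Set.Icc a b, |g s| ≤ B := by
  have key : ∀ t : ℝ≥0, ∃ U : Set ℝ≥0, U ∈ 𝓝 t ∧ ∃ B : ℝ, ∀ s ∈ U, |g s| ≤ B := by
    intro t
    have h1 : {s | g s ∈ Metric.ball (g t) 1} ∈ 𝓝[≥] t :=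
      hr t (Metric.ball_mem_nhds (g t) one_pos)
    obtain ⟨d, hd, hIcod⟩ := mem_nhdsGE_iff_exists_Ico_subset.mp h1
    rcases eq_or_lt_of_le (zero_le : (0:ℝ≥0) ≤ t) with h0 | h0
    · refine ⟨Set.Iio d, isOpen_Iio.mem_nhds (h0 ▸ hd), |g t| + 1, ?_⟩
      intro s hs
      have hmem : s ∈ Set.Ico t d := ⟨h0 ▸ (zero_le : (0:ℝ≥0) ≤ s), hs⟩
      have h2 := hIcod hmem
      simp only [Set.mem_setOf_eq, Metric.mem_ball, Real.dist_eq] at h2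
      have h3 : |g s| - |g t| ≤ |g s - g t| := abs_sub_abs_le_abs_sub _ _
      linarith
    · obtain ⟨l, hlt⟩ := hl t h0
      have h2 : {s | g s ∈ Metric.ball l 1} ∈ 𝓝[<] t := hlt (Metric.ball_mem_nhds l one_pos)
      obtain ⟨c, hc, hIooc⟩ := (mem_nhdsLT_iff_exists_Ioo_subset' h0).mp h2
      refine ⟨Set.Ioo c d, isOpen_Ioo.mem_nhds ⟨hc, hd⟩, max (|g t| + 1) (|l| + 1), ?_⟩
      intro s hs
      rcases lt_or_ge s t with hst | hts
      · have h3 := hIooc ⟨hs.1, hst⟩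
        simp only [Set.mem_setOf_eq, Metric.mem_ball, Real.dist_eq] at h3
        have h4 : |g s| - |l| ≤ |g s - l| := abs_sub_abs_le_abs_sub _ _
        have : |g s| ≤ |l| + 1 := by linarith
        exact this.trans (le_max_right _ _)
      · have h3 := hIcod ⟨hts, hs.2⟩
        simp only [Set.mem_setOf_eq, Metric.mem_ball, Real.dist_eq] at h3
        have h4 : |g s| - |g t| ≤ |g s - g t| := abs_sub_abs_le_abs_sub _ _
        have : |g s| ≤ |g t| + 1 := by linarith
        exact this.trans (le_max_left _ _)
  choose U hU B hB using key
  obtain ⟨F, hF⟩ := (isCompact_Icc (a := a) (b := b)).elim_nhds_subcover U fun t _ => hU t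
  refine ⟨∑ x ∈ F, |B x|, fun s hs => ?_⟩
  obtain ⟨x, hxF, hsx⟩ := Set.mem_iUnion₂.mp (hF.2 hs)
  calc |g s| ≤ B x := hB x s hsx
    _ ≤ |B x| := le_abs_self _
    _ ≤ ∑ y ∈ F, |B y| := Finset.single_le_sum (fun y _ => abs_nonneg (B y)) hxF

/-- If for every a.s. bounded stopping time `τ`, every `A ∈ F_τ` with `P(A) > 0`, every
`ε > 0` and every `T` with `τ ≤ T` a.s. one has
`P(A ∩ {sup_{t ∈ [τ, T]} |X_τ - X_t| < ε}) > 0`, then for every a.s. bounded stopping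
time `τ₀` and every `δ > 0` the stopping time `τ₁ = inf{t ≥ τ₀ : |X_t - X_{τ₀}| > δ}`
is unbounded on every `A ∈ F_{τ₀}` with `P(A) > 0`. -/
theorem sticky_b_implies_c {Ω : Type*} {m : MeasurableSpace Ω}
    (𝓕 : MeasureTheory.Filtration ℝ≥0 m) (P : MeasureTheory.Measure Ω)
    [MeasureTheory.IsProbabilityMeasure P] [P.IsComplete]
    (hRC : ∀ t : ℝ≥0, (𝓕 t : MeasurableSpace Ω)
      = ⨅ s : ℝ≥0, ⨅ _ : t < s, (𝓕 s : MeasurableSpace Ω))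
    (hNull : ∀ N : Set Ω, MeasurableSet N → P N = 0 → MeasurableSet[𝓕 0] N)
    (X : ℝ≥0 → Ω → ℝ) (hprog : MeasureTheory.ProgMeasurable 𝓕 X) (hcadlag : IsCadlag X)
    (hb : ∀ τ : Ω → ℝ≥0, ∀ hτ : MeasureTheory.IsStoppingTime 𝓕 (fun ω => (τ ω : WithTop ℝ≥0)),
      (∃ C : ℝ≥0, ∀ᵐ ω ∂P, τ ω ≤ C) →
      ∀ A : Set Ω, MeasurableSet[hτ.measurableSpace] A → 0 < P A →
      ∀ ε : ℝ, 0 < ε → ∀ T : ℝ≥0, (∀ᵐ ω ∂P, τ ω ≤ T) →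
      0 < P (A ∩ {ω | (⨆ t ∈ Set.Icc (τ ω) T, |X (τ ω) ω - X t ω|) < ε}))
    (τ₀ : Ω → ℝ≥0) (hτ₀ : MeasureTheory.IsStoppingTime 𝓕 (fun ω => (τ₀ ω : WithTop ℝ≥0)))
    (hτ₀bdd : ∃ C : ℝ≥0, ∀ᵐ ω ∂P, τ₀ ω ≤ C) (δ : ℝ) (hδ : 0 < δ)
    (A : Set Ω) (hA : MeasurableSet[hτ₀.measurableSpace] A) (hApos : 0 < P A) :
    ∀ M : ℝ≥0, 0 < P (A ∩ {ω | (M : ℝ≥0∞) < hitTime X τ₀ δ ω}) := by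

  obtain ⟨C, hC⟩ := hτ₀bdd
  intro M
  set T : ℝ≥0 := (C ⊔ M) + 1 with hT
  have hτT : ∀ᵐ ω ∂P, τ₀ ω ≤ T :=
    hC.mono fun ω h => le_trans (h.trans le_sup_left) le_self_add
  have hpos := hb τ₀ hτ₀ ⟨C, hC⟩ A hA hApos δ hδ T hτT
  set E := {ω | (⨆ t ∈ Set.Icc (τ₀ ω) T, |X (τ₀ ω) ω - X t ω|) < δ} with hE
  have claim : ∀ ω, τ₀ ω ≤ C → ω ∈ E → (M : ℝ≥0∞) < hitTime X τ₀ δ ω := by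
    intro ω hωC hωE
    have hτ₀T : τ₀ ω ≤ T := le_trans (hωC.trans le_sup_left) le_self_add
    obtain ⟨B, hB⟩ := cadlag_bounded (fun s => X s ω) (hcadlag ω).1 (hcadlag ω).2 (τ₀ ω) T
    set f : ℝ≥0 → ℝ := fun t => |X (τ₀ ω) ω - X t ω| with hf
    have hbdd : BddAbove (Set.range fun t => ⨆ _ : t ∈ Set.Icc (τ₀ ω) T, f t) := by
      refine ⟨max (2 * B) 0, ?_⟩
      rintro x ⟨t, rfl⟩
      show (⨆ _ : t ∈ Set.Icc (τ₀ ω) T, f t) ≤ max (2 * B) 0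
      by_cases ht : t ∈ Set.Icc (τ₀ ω) T
      · rw [ciSup_pos ht]
        have h1 : |X (τ₀ ω) ω| ≤ B := hB _ ⟨le_rfl, hτ₀T⟩
        have h2 : |X t ω| ≤ B := hB _ ht
        have h3 : f t ≤ |X (τ₀ ω) ω| + |X t ω| := abs_sub _ _
        have : f t ≤ 2 * B := by linarith
        exact this.trans (le_max_left _ _)
      · have : IsEmpty (t ∈ Set.Icc (τ₀ ω) T) := ⟨ht⟩
        rw [Real.iSup_of_isEmpty]
        exact le_max_right _ _
    have hle : ∀ u : ℝ≥0, τ₀ ω ≤ u → δ < |X u ω - X (τ₀ ω) ω| → T ≤ u := by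
      intro u hu hδu
      by_contra hlt
      push_neg at hlt
      have hu2 : u ∈ Set.Icc (τ₀ ω) T := ⟨hu, hlt.le⟩
      have h5 : f u ≤ ⨆ t, ⨆ _ : t ∈ Set.Icc (τ₀ ω) T, f t := by
        have := le_ciSup hbdd u
        rwa [ciSup_pos hu2] at this
      have hlt2 : f u < δ := lt_of_le_of_lt h5 hωE
      rw [abs_sub_comm] at hδu
      simp only [hf] at hlt2
      linarith
    have hTinf : (T : ℝ≥0∞) ≤ hitTime X τ₀ δ ω := by
      refine le_sInf ?_
      rintro v ⟨u, ⟨hu1, hu2⟩, rfl⟩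
      show (T : ℝ≥0∞) ≤ (u : ℝ≥0∞)
      exact_mod_cast hle u hu1 hu2
    refine lt_of_lt_of_le ?_ hTinf
    have : M < T := lt_of_le_of_lt le_sup_right (lt_add_one _)
    exact_mod_cast this
  have hSc : P {ω | ¬ τ₀ ω ≤ C} = 0 := ae_iff.mp hC
  have hsub : A ∩ E ∩ {ω | τ₀ ω ≤ C} ⊆ A ∩ {ω | (M : ℝ≥0∞) < hitTime X τ₀ δ ω} :=
    fun ω ⟨⟨hA', hE'⟩, hS'⟩ => ⟨hA', claim ω hS' hE'⟩
  calc (0 : ℝ≥0∞) < P (A ∩ E) := hpos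
    _ ≤ P ((A ∩ E ∩ {ω | τ₀ ω ≤ C}) ∪ {ω | ¬ τ₀ ω ≤ C}) := by
        refine measure_mono fun ω hω => ?_
        by_cases h : τ₀ ω ≤ C
        · exact Or.inl ⟨hω, h⟩
        · exact Or.inr h
    _ ≤ P (A ∩ E ∩ {ω | τ₀ ω ≤ C}) + P {ω | ¬ τ₀ ω ≤ C} := measure_union_le _ _
    _ = P (A ∩ E ∩ {ω | τ₀ ω ≤ C}) := by rw [hSc, add_zero]
    _ ≤ _ := measure_mono hsub
end

section
/- Let X be a progressively measurable càdlàg real-valued process on a filtered probability space satisfying the usual hypotheses. Suppose that for every a.s. bounded stopping time τ₀ and every δ > 0, the stopping time τ₁ = inf{t ≥ τ₀ : |X_t − X_{τ₀}| > δ} satisfies: for every A ∈ F_{τ₀} with P(A) > 0 and every real M, P(A ∩ {τ₁ > M}) > 0. Then X is sticky, i.e., for all ε > 0, T > 0 and all stopping times τ with P(τ < T) > 0, one has P({sup_{t ∈ [τ,T]} |X_τ − X_t| < ε} ∩ {τ < T}) > 0. -/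
open MeasureTheory Filter Set Topology
open scoped NNReal ENNReal

/-- If for every a.s. bounded stopping time `τ₀` and every `δ > 0`, the stopping time
`τ₁ = inf{t ≥ τ₀ : |X_t - X_{τ₀}| > δ}` is unbounded on every `A ∈ F_{τ₀}` with
`P(A) > 0`, then `X` is sticky. -/
theorem sticky_c_implies_a {Ω : Type*} {m : MeasurableSpace Ω}
    (𝓕 : MeasureTheory.Filtration ℝ≥0 m) (P : MeasureTheory.Measure Ω)
    [MeasureTheory.IsProbabilityMeasure P] [P.IsComplete]
    (hRC : ∀ t : ℝ≥0, (𝓕 t : MeasurableSpace Ω)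
      = ⨅ s : ℝ≥0, ⨅ _ : t < s, (𝓕 s : MeasurableSpace Ω))
    (hNull : ∀ N : Set Ω, MeasurableSet N → P N = 0 → MeasurableSet[𝓕 0] N)
    (X : ℝ≥0 → Ω → ℝ) (hprog : MeasureTheory.ProgMeasurable 𝓕 X) (hcadlag : IsCadlag X)
    (hc : ∀ τ₀ : Ω → ℝ≥0, ∀ hτ₀ : MeasureTheory.IsStoppingTime 𝓕 (fun ω => (τ₀ ω : WithTop ℝ≥0)),
      (∃ C : ℝ≥0, ∀ᵐ ω ∂P, τ₀ ω ≤ C) → ∀ δ : ℝ, 0 < δ →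
      ∀ A : Set Ω, MeasurableSet[hτ₀.measurableSpace] A → 0 < P A →
      ∀ M : ℝ≥0, 0 < P (A ∩ {ω | (M : ℝ≥0∞) < hitTime X τ₀ δ ω})) :
    Sticky 𝓕 P X := by
  intro ε hε T hT τ hτ hP
  set τ₀ : Ω → ℝ≥0 := fun ω => min (τ ω) T with hτ₀def
  have hτ₀ : MeasureTheory.IsStoppingTime 𝓕 (fun ω => (τ₀ ω : WithTop ℝ≥0)) := by
    simp only [τ₀, WithTop.coe_min]; exact hτ.min_const T
  have hbdd : ∃ C : ℝ≥0, ∀ᵐ ω ∂P, τ₀ ω ≤ C :=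
    ⟨T, Filter.Eventually.of_forall fun ω => min_le_right _ _⟩
  have hA : MeasurableSet[hτ₀.measurableSpace] {ω | τ ω < T} := by
    have hset : {ω | τ ω < T} = {ω | (τ₀ ω : WithTop ℝ≥0) < T} := by
      ext ω; simp only [Set.mem_setOf_eq, τ₀, WithTop.coe_lt_coe, min_lt_iff, lt_irrefl, or_false]
    rw [hset]; exact hτ₀.measurableSet_lt' T
  have key := hc τ₀ hτ₀ hbdd (ε/2) (by linarith) {ω | τ ω < T} hA hP T
  refine lt_of_lt_of_le key (measure_mono ?_)
  rintro ω ⟨hωlt, hωhit⟩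
  have hmin : τ₀ ω = τ ω := min_eq_left (le_of_lt hωlt)
  refine ⟨?_, hωlt⟩
  have hbound : ∀ t ∈ Set.Icc (τ ω) T, |X (τ ω) ω - X t ω| ≤ ε/2 := by
    intro t ht
    by_contra hgt
    push_neg at hgt
    have : (t : ℝ≥0∞) ∈ ((fun u : ℝ≥0 => (u : ℝ≥0∞)) ''
        {u : ℝ≥0 | τ₀ ω ≤ u ∧ ε/2 < |X u ω - X (τ₀ ω) ω|}) := by
      refine ⟨t, ⟨?_, ?_⟩, rfl⟩
      · rw [hmin]; exact ht.1
      · rw [hmin, abs_sub_comm]; exact hgt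
    have h1 : hitTime X τ₀ (ε/2) ω ≤ (t : ℝ≥0∞) := sInf_le this
    have h2 : (t : ℝ≥0∞) ≤ (T : ℝ≥0∞) := by exact_mod_cast ht.2
    exact absurd (lt_of_lt_of_le hωhit (h1.trans h2)) (lt_irrefl _)
  have hsup : (⨆ t ∈ Set.Icc (τ ω) T, |X (τ ω) ω - X t ω|) ≤ ε/2 := by
    refine Real.iSup_le (fun t => Real.iSup_le (fun ht => hbound t ht) (by linarith)) (by linarith)
  exact lt_of_le_of_lt hsup (by linarith)
end

section
/- Let X be a progressively measurable càdlàg real-valued process on a filtered probability space satisfying the usual hypotheses. The following are equivalent: (a) X is sticky; (b) for every a.s. bounded stopping time τ, every A ∈ F_τ with P(A) > 0, every ε > 0, and every real T with τ ≤ T a.s., P(A ∩ {sup_{t ∈ [τ,T]} |X_τ − X_t| < ε}) > 0; (c) for every a.s. bounded stopping time τ₀ and every δ > 0, the stopping time τ₁ = inf{t ≥ τ₀ : |X_t − X_{τ₀}| > δ} is unbounded on every A ∈ F_{τ₀} with P(A) > 0, i.e., for every real M, P(A ∩ {τ₁ > M}) > 0. -/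
open MeasureTheory Filter Set Topology
open scoped NNReal ENNReal

private lemma real_biSup_le {S : Set ℝ≥0} {g : ℝ≥0 → ℝ} {B : ℝ}
    (hB : 0 ≤ B) (h : ∀ t ∈ S, g t ≤ B) : (⨆ t ∈ S, g t) ≤ B :=
  Real.iSup_le (fun t => Real.iSup_le (fun ht => h t ht) hB) hB

private lemma le_real_biSup {S : Set ℝ≥0} (g : ℝ≥0 → ℝ) {B : ℝ}
    (hB : ∀ t ∈ S, g t ≤ B) {t : ℝ≥0} (ht : t ∈ S) : g t ≤ ⨆ u ∈ S, g u := by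
  have hbdd : BddAbove (Set.range fun u => ⨆ _ : u ∈ S, g u) := by
    refine ⟨max B 0, ?_⟩
    rintro x ⟨u, rfl⟩
    show (⨆ _ : u ∈ S, g u) ≤ max B 0
    by_cases hu : u ∈ S
    · rw [ciSup_pos (f := fun _ => g u) hu]; exact le_max_of_le_left (hB u hu)
    · haveI : IsEmpty (u ∈ S) := ⟨hu⟩
      rw [Real.iSup_of_isEmpty]
      exact le_max_right _ _
  calc g t = ⨆ _ : t ∈ S, g t := (ciSup_pos (f := fun _ => g t) ht).symm
    _ ≤ ⨆ u ∈ S, g u := le_ciSup hbdd t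

private lemma cadlag_bdd {f : ℝ≥0 → ℝ}
    (hr : ∀ t : ℝ≥0, ContinuousWithinAt f (Set.Ici t) t)
    (hl : ∀ t : ℝ≥0, 0 < t → ∃ l : ℝ, Tendsto f (𝓝[<] t) (𝓝 l))
    (a b : ℝ≥0) : ∃ B : ℝ, ∀ t ∈ Set.Icc a b, |f t| ≤ B := by
  have key : ∀ x : ℝ≥0, ∃ U : Set ℝ≥0, U ∈ 𝓝 x ∧ ∃ B : ℝ, 0 ≤ B ∧ ∀ s ∈ U, |f s| ≤ B := by
    intro x
    obtain ⟨u1, hu1o, hxu1, hu1⟩ :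
        ∃ u : Set ℝ≥0, IsOpen u ∧ x ∈ u ∧ ∀ s ∈ u ∩ Set.Ici x, dist (f s) (f x) < 1 := by
      have h := Metric.tendsto_nhds.mp (hr x) 1 one_pos
      rw [eventually_iff, mem_nhdsWithin] at h
      obtain ⟨u, huo, hxu, hu⟩ := h
      exact ⟨u, huo, hxu, fun s hs => hu hs⟩
    obtain ⟨l, u2, hu2o, hxu2, hu2⟩ :
        ∃ l : ℝ, ∃ u : Set ℝ≥0, IsOpen u ∧ x ∈ u ∧ ∀ s ∈ u ∩ Set.Iio x, dist (f s) l < 1 := by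
      rcases eq_or_lt_of_le (zero_le : (0 : ℝ≥0) ≤ x) with hx0 | hx0
      · refine ⟨f x, Set.univ, isOpen_univ, Set.mem_univ x, fun s hs => ?_⟩
        exact absurd hs.2 (by rw [← hx0]; simp)
      · obtain ⟨l, hl'⟩ := hl x hx0
        have h := Metric.tendsto_nhds.mp hl' 1 one_pos
        rw [eventually_iff, mem_nhdsWithin] at h
        obtain ⟨u, huo, hxu, hu⟩ := h
        exact ⟨l, u, huo, hxu, fun s hs => hu hs⟩
    refine ⟨u1 ∩ u2, (hu1o.inter hu2o).mem_nhds ⟨hxu1, hxu2⟩,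
      max (|f x| + 1) (|l| + 1), le_max_of_le_left (by positivity), fun s hs => ?_⟩
    rcases le_or_gt x s with hxs | hsx
    · have h := hu1 s ⟨hs.1, hxs⟩
      rw [Real.dist_eq] at h
      have h2 := abs_sub_abs_le_abs_sub (f s) (f x)
      exact le_max_of_le_left (by linarith)
    · have h := hu2 s ⟨hs.2, hsx⟩
      rw [Real.dist_eq] at h
      have h2 := abs_sub_abs_le_abs_sub (f s) l
      exact le_max_of_le_right (by linarith)
  choose U hU B hB0 hB using key
  obtain ⟨F, -, hF⟩ := (isCompact_Icc (a := a) (b := b)).elim_nhds_subcover U (fun x _ => hU x)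
  refine ⟨∑ x ∈ F, B x, fun t ht => ?_⟩
  obtain ⟨x, hxF, hxU⟩ := Set.mem_iUnion₂.mp (hF ht)
  exact (hB x t hxU).trans (Finset.single_le_sum (fun i _ => hB0 i) hxF)

private lemma oscBound {Ω : Type*} {X : ℝ≥0 → Ω → ℝ} (hc : IsCadlag X) (ω : Ω) (c a b : ℝ≥0) :
    ∃ B : ℝ, ∀ t ∈ Set.Icc a b, |X c ω - X t ω| ≤ B := by
  obtain ⟨B, hB⟩ := cadlag_bdd (hc ω).1 (hc ω).2 a b
  refine ⟨|X c ω| + B, fun t ht => ?_⟩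
  calc |X c ω - X t ω| ≤ |X c ω| + |X t ω| := abs_sub _ _
    _ ≤ |X c ω| + B := by linarith [hB t ht]

private lemma term_le_sup {Ω : Type*} {X : ℝ≥0 → Ω → ℝ} (hc : IsCadlag X) (ω : Ω)
    {c T t : ℝ≥0} (ht : t ∈ Set.Icc c T) :
    |X c ω - X t ω| ≤ ⨆ u ∈ Set.Icc c T, |X c ω - X u ω| := by
  obtain ⟨B, hB⟩ := oscBound hc ω c c T
  exact le_real_biSup _ hB ht

private lemma sup_small_lt {Ω : Type*} {X : ℝ≥0 → Ω → ℝ} (hc : IsCadlag X) (ω : Ω)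
    {c T T' : ℝ≥0} (hTT' : T ≤ T') (hcT' : c ≤ T') {ε : ℝ}
    (h : (⨆ t ∈ Set.Icc c T', |X c ω - X t ω|) < ε) :
    (⨆ t ∈ Set.Icc c T, |X c ω - X t ω|) < ε := by
  have hterm : ∀ t ∈ Set.Icc c T', |X c ω - X t ω| ≤ ⨆ u ∈ Set.Icc c T', |X c ω - X u ω| :=
    fun t ht => term_le_sup hc ω ht
  have h0 : 0 ≤ ⨆ u ∈ Set.Icc c T', |X c ω - X u ω| := by
    have := hterm c ⟨le_rfl, hcT'⟩
    simpa using this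
  exact lt_of_le_of_lt (real_biSup_le h0 (fun t ht => hterm t ⟨ht.1, ht.2.trans hTT'⟩)) h

/-- For a progressively measurable càdlàg process `X` on a filtered probability space
satisfying the usual hypotheses, the following are equivalent:
(a) `X` is sticky;
(b) for every a.s. bounded stopping time `τ`, every `A ∈ F_τ` with `P(A) > 0`, every
    `ε > 0` and every `T` with `τ ≤ T` a.s., `P(A ∩ {sup_{t∈[τ,T]} |X_τ - X_t| < ε}) > 0`;
(c) for every a.s. bounded stopping time `τ₀` and every `δ > 0`, the stopping time
    `τ₁ = inf{t ≥ τ₀ : |X_t - X_{τ₀}| > δ}` is unbounded on every `A ∈ F_{τ₀}` with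
    `P(A) > 0`. -/
theorem sticky_tfae {Ω : Type*} {m : MeasurableSpace Ω}
    (𝓕 : MeasureTheory.Filtration ℝ≥0 m) (P : MeasureTheory.Measure Ω)
    [MeasureTheory.IsProbabilityMeasure P] [P.IsComplete]
    (hRC : ∀ t : ℝ≥0, (𝓕 t : MeasurableSpace Ω)
      = ⨅ s : ℝ≥0, ⨅ _ : t < s, (𝓕 s : MeasurableSpace Ω))
    (hNull : ∀ N : Set Ω, MeasurableSet N → P N = 0 → MeasurableSet[𝓕 0] N)
    (X : ℝ≥0 → Ω → ℝ) (hprog : MeasureTheory.ProgMeasurable 𝓕 X)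
    (hcadlag : IsCadlag X) :
    (Sticky 𝓕 P X ↔
      (∀ τ : Ω → ℝ≥0, ∀ hτ : MeasureTheory.IsStoppingTime 𝓕 (fun ω => (τ ω : WithTop ℝ≥0)),
        (∃ C : ℝ≥0, ∀ᵐ ω ∂P, τ ω ≤ C) →
        ∀ A : Set Ω, MeasurableSet[hτ.measurableSpace] A → 0 < P A →
        ∀ ε : ℝ, 0 < ε → ∀ T : ℝ≥0, (∀ᵐ ω ∂P, τ ω ≤ T) →
        0 < P (A ∩ {ω | (⨆ t ∈ Set.Icc (τ ω) T, |X (τ ω) ω - X t ω|) < ε})))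
    ∧ ((∀ τ : Ω → ℝ≥0, ∀ hτ : MeasureTheory.IsStoppingTime 𝓕 (fun ω => (τ ω : WithTop ℝ≥0)),
        (∃ C : ℝ≥0, ∀ᵐ ω ∂P, τ ω ≤ C) →
        ∀ A : Set Ω, MeasurableSet[hτ.measurableSpace] A → 0 < P A →
        ∀ ε : ℝ, 0 < ε → ∀ T : ℝ≥0, (∀ᵐ ω ∂P, τ ω ≤ T) →
        0 < P (A ∩ {ω | (⨆ t ∈ Set.Icc (τ ω) T, |X (τ ω) ω - X t ω|) < ε})) ↔
      (∀ τ₀ : Ω → ℝ≥0, ∀ hτ₀ : MeasureTheory.IsStoppingTime 𝓕 (fun ω => (τ₀ ω : WithTop ℝ≥0)),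
        (∃ C : ℝ≥0, ∀ᵐ ω ∂P, τ₀ ω ≤ C) → ∀ δ : ℝ, 0 < δ →
        ∀ A : Set Ω, MeasurableSet[hτ₀.measurableSpace] A → 0 < P A →
        ∀ M : ℝ≥0, 0 < P (A ∩ {ω | (M : ℝ≥0∞) < hitTime X τ₀ δ ω}))) := by
  classical
  constructor
  · constructor
    · -- (a) → (b)
      intro ha τ hτ _hbdd A hA hPA ε hε T hT
      have hAm : MeasurableSet A := hτ.measurableSpace_le _ hA
      have hτm : Measurable τ := measurable_of_Iic fun i => by
        have := hτ.measurableSpace_le _ (hτ.measurableSet_le' i)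
        simpa only [Set.preimage, Set.mem_Iic, WithTop.coe_le_coe] using this
      set σ : Ω → ℝ≥0 := fun ω => if ω ∈ A then min (τ ω) T else T + 1 with hσdef
      have hσ : IsStoppingTime 𝓕 (fun ω => (σ ω : WithTop ℝ≥0)) := by
        intro t
        simp_rw [WithTop.coe_le_coe]
        rcases lt_or_ge t T with h1 | h1
        · have hset1 : {ω | σ ω ≤ t} = A ∩ {ω | τ ω ≤ t} := by
            ext ω
            simp only [Set.mem_setOf_eq, Set.mem_inter_iff, hσdef]
            by_cases hω : ω ∈ A
            · rw [if_pos hω]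
              simp only [hω, true_and, min_le_iff]
              constructor
              · rintro (h | h)
                · exact h
                · exact absurd h (not_le.mpr h1)
              · exact Or.inl
            · rw [if_neg hω]
              simp only [hω, false_and, iff_false]
              intro hcon
              exact absurd h1 (not_lt.mpr (le_self_add.trans hcon))
          rw [hset1]
          simpa only [WithTop.coe_le_coe] using ((IsStoppingTime.measurableSet hτ A).mp hA).2 t
        · rcases lt_or_ge t (T + 1) with h2 | h2
          · have hset2 : {ω | σ ω ≤ t} = A := by
              ext ω
              simp only [Set.mem_setOf_eq, hσdef]
              constructor
              · intro h
                by_contra hω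
                rw [if_neg hω] at h
                exact absurd h2 (not_lt.mpr h)
              · intro hω
                rw [if_pos hω]
                exact le_trans (min_le_right _ _) h1
            rw [hset2]
            have hA1 : MeasurableSet[𝓕 t] (A ∩ {ω | τ ω ≤ t}) :=
              by simpa only [WithTop.coe_le_coe] using ((IsStoppingTime.measurableSet hτ A).mp hA).2 t
            have hN : MeasurableSet[𝓕 t] (A ∩ {ω | τ ω ≤ t}ᶜ) := by
              refine 𝓕.mono (zero_le : (0 : ℝ≥0) ≤ t) _ (hNull _ ?_ ?_)
              · exact hAm.inter (hτm measurableSet_Iic).compl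
              · refine measure_mono_null (fun ω hω => ?_) (ae_iff.mp hT)
                exact fun hcon => hω.2 (hcon.trans h1)
            have hAeq : A = (A ∩ {ω | τ ω ≤ t}) ∪ (A ∩ {ω | τ ω ≤ t}ᶜ) :=
              (Set.inter_union_compl A _).symm
            rw [hAeq]
            exact hA1.union hN
          · have hset3 : {ω | σ ω ≤ t} = Set.univ := by
              ext ω
              simp only [Set.mem_setOf_eq, Set.mem_univ, iff_true, hσdef]
              by_cases hω : ω ∈ A
              · rw [if_pos hω]
                exact le_trans (min_le_right _ _) (le_trans le_self_add h2)
              · rw [if_neg hω]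
                exact h2
            rw [hset3]
            exact MeasurableSet.univ
      have hset : {ω | σ ω < T + 1} = A := by
        ext ω
        simp only [Set.mem_setOf_eq, hσdef]
        constructor
        · intro h
          by_contra hω
          rw [if_neg hω] at h
          exact lt_irrefl _ h
        · intro hω
          rw [if_pos hω]
          exact lt_of_le_of_lt (min_le_right _ _) (lt_add_of_pos_right T zero_lt_one)
      have hpos : 0 < P {ω | σ ω < T + 1} := by rw [hset]; exact hPA
      have hE := ha ε hε (T + 1) (zero_lt_one.trans_le le_add_self) σ hσ hpos
      rw [hset] at hE
      refine lt_of_lt_of_le hE ?_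
      refine le_trans (measure_le_inter_add_diff P _ {ω | τ ω ≤ T}) ?_
      have hz : P (({ω | (⨆ t ∈ Set.Icc (σ ω) (T + 1), |X (σ ω) ω - X t ω|) < ε} ∩ A)
          \ {ω | τ ω ≤ T}) = 0 :=
        measure_mono_null (fun ω hω => hω.2) (ae_iff.mp hT)
      rw [hz, add_zero]
      refine measure_mono ?_
      rintro ω ⟨⟨hωE, hωA⟩, hωT⟩
      have hωT' : τ ω ≤ T := hωT
      refine ⟨hωA, ?_⟩
      have hσω : σ ω = τ ω := by
        rw [hσdef]
        simp only
        rw [if_pos hωA, min_eq_left hωT']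
      rw [Set.mem_setOf_eq] at hωE ⊢
      rw [hσω] at hωE
      exact sup_small_lt hcadlag ω le_self_add (hωT'.trans le_self_add) hωE
    · -- (b) → (a)
      intro hb ε hε T _hTpos τ hτ hlt
      have hτ' : IsStoppingTime 𝓕 (fun ω => ((min (τ ω) T : ℝ≥0) : WithTop ℝ≥0)) := by
        simpa only [WithTop.coe_min] using hτ.min_const T
      have hAmeas : MeasurableSet[hτ'.measurableSpace] {ω | τ ω < T} := by
        rw [IsStoppingTime.measurableSet]
        refine ⟨le_iSup 𝓕 T _ (by simpa only [WithTop.coe_lt_coe] using hτ.measurableSet_lt T), fun t => ?_⟩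
        simp_rw [WithTop.coe_le_coe]
        rcases lt_or_ge t T with h | h
        · have hseteq : {ω | τ ω < T} ∩ {ω | min (τ ω) T ≤ t} = {ω | τ ω ≤ t} := by
            ext ω
            simp only [Set.mem_inter_iff, Set.mem_setOf_eq, min_le_iff]
            constructor
            · rintro ⟨h1, h2 | h2⟩
              · exact h2
              · exact absurd h2 (not_le.mpr h)
            · intro h1
              exact ⟨lt_of_le_of_lt h1 h, Or.inl h1⟩
          rw [hseteq]
          simpa only [WithTop.coe_le_coe] using hτ t
        · have hseteq : {ω | τ ω < T} ∩ {ω | min (τ ω) T ≤ t} = {ω | τ ω < T} := by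
            ext ω
            simp only [Set.mem_inter_iff, Set.mem_setOf_eq, min_le_iff, and_iff_left_iff_imp]
            exact fun _ => Or.inr h
          rw [hseteq]
          exact 𝓕.mono h _ (by simpa only [WithTop.coe_lt_coe] using hτ.measurableSet_lt T)
      have h := hb (fun ω => min (τ ω) T) hτ'
        ⟨T, ae_of_all _ fun ω => min_le_right _ _⟩ {ω | τ ω < T} hAmeas hlt ε hε T
        (ae_of_all _ fun ω => min_le_right _ _)
      refine lt_of_lt_of_le h (measure_mono ?_)
      rintro ω ⟨h1, h2⟩
      have hmin : min (τ ω) T = τ ω := min_eq_left h1.le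
      refine ⟨?_, h1⟩
      have h2' : (⨆ t ∈ Set.Icc (τ ω ⊓ T) T, |X (τ ω ⊓ T) ω - X t ω|) < ε := h2
      rw [hmin] at h2'
      exact h2'
  · constructor
    · -- (b) → (c)
      intro hb τ₀ hτ₀ hbdd δ hδ A hA hPA M
      obtain ⟨C, hC⟩ := hbdd
      have hT : ∀ᵐ ω ∂P, τ₀ ω ≤ max C M + 1 :=
        hC.mono fun ω h => h.trans ((le_max_left C M).trans le_self_add)
      have h := hb τ₀ hτ₀ ⟨C, hC⟩ A hA hPA δ hδ (max C M + 1) hT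
      refine lt_of_lt_of_le h (measure_mono ?_)
      rintro ω ⟨hωA, hsup⟩
      refine ⟨hωA, ?_⟩
      rw [Set.mem_setOf_eq] at hsup ⊢
      have hMT : (M : ℝ≥0∞) < ((max C M + 1 : ℝ≥0) : ℝ≥0∞) := by
        exact_mod_cast lt_of_le_of_lt (le_max_right C M) (lt_add_of_pos_right _ zero_lt_one)
      refine lt_of_lt_of_le hMT (le_sInf ?_)
      rintro v ⟨u, ⟨hu1, hu2⟩, rfl⟩
      have hTu : max C M + 1 ≤ u := by
        by_contra hTu
        push_neg at hTu
        have hterm := term_le_sup hcadlag ω (c := τ₀ ω) (T := max C M + 1) ⟨hu1, hTu.le⟩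
        rw [abs_sub_comm] at hu2
        linarith [lt_of_le_of_lt hterm hsup]
      show ((max C M + 1 : ℝ≥0) : ℝ≥0∞) ≤ (u : ℝ≥0∞)
      exact_mod_cast hTu
    · -- (c) → (b)
      intro hc τ hτ hbdd A hA hPA ε hε T _hT
      have h := hc τ hτ hbdd (ε / 2) (half_pos hε) A hA hPA T
      refine lt_of_lt_of_le h (measure_mono ?_)
      rintro ω ⟨hωA, hhit⟩
      refine ⟨hωA, ?_⟩
      rw [Set.mem_setOf_eq] at hhit ⊢
      have hbound : ∀ t ∈ Set.Icc (τ ω) T, |X (τ ω) ω - X t ω| ≤ ε / 2 := by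
        intro t ht
        by_contra hcon
        push_neg at hcon
        have htmem : t ∈ {u : ℝ≥0 | τ ω ≤ u ∧ ε / 2 < |X u ω - X (τ ω) ω|} :=
          ⟨ht.1, by rw [abs_sub_comm]; exact hcon⟩
        have h1 : hitTime X τ (ε / 2) ω ≤ (t : ℝ≥0∞) :=
          sInf_le (Set.mem_image_of_mem _ htmem)
        have h2 : (t : ℝ≥0∞) ≤ (T : ℝ≥0∞) := by exact_mod_cast ht.2
        exact absurd hhit (not_lt.mpr (h1.trans h2))
      exact lt_of_le_of_lt (real_biSup_le (by linarith) hbound) (by linarith)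
end

section
/- Let X be a progressively measurable càdlàg process taking values in an open interval (a, b), where −∞ ≤ a < b ≤ +∞, on a filtered probability space satisfying the usual hypotheses, and let f : (a, b) → ℝ be a continuous function. If X is sticky, then the process f(X) = (f(X_t))_{t≥0} is also sticky. -/
open MeasureTheory Filter Set Topology
open scoped NNReal ENNReal

lemma cadlag_bddAbs (g : ℝ≥0 → ℝ)
    (hr : ∀ t : ℝ≥0, ContinuousWithinAt g (Set.Ici t) t)
    (hl : ∀ t : ℝ≥0, 0 < t → ∃ l : ℝ, Tendsto g (nhdsWithin t (Set.Iio t)) (nhds l))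
    (T : ℝ≥0) : ∃ M : ℝ, ∀ t ∈ Set.Icc 0 T, |g t| ≤ M := by
  have key : ∀ t : ℝ≥0, ∃ C : ℝ, ∀ᶠ x in 𝓝 t, |g x| ≤ C := by
    intro t
    have hright : ∀ᶠ x in 𝓝[≥] t, |g x| ≤ |g t| + 1 := by
      have h1 : Tendsto g (𝓝[≥] t) (𝓝 (g t)) := hr t
      filter_upwards [h1 (Metric.closedBall_mem_nhds (g t) one_pos)] with x hx
      have : |g x - g t| ≤ 1 := by simpa [Real.dist_eq] using hx
      calc |g x| = |g x - g t + g t| := by ring_nf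
        _ ≤ |g x - g t| + |g t| := abs_add_le _ _
        _ ≤ |g t| + 1 := by linarith
    rcases eq_or_lt_of_le (zero_le : (0:ℝ≥0) ≤ t) with ht | ht
    · refine ⟨|g t| + 1, ?_⟩
      rw [← nhdsLT_sup_nhdsGE t, eventually_sup]
      refine ⟨?_, hright⟩
      have : Set.Iio t = (∅ : Set ℝ≥0) := by
        ext x; simp [← ht]
      rw [nhdsWithin, this]
      simp
    · obtain ⟨l, hl⟩ := hl t ht
      refine ⟨max (|g t| + 1) (|l| + 1), ?_⟩
      rw [← nhdsLT_sup_nhdsGE t, eventually_sup]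
      constructor
      · filter_upwards [hl (Metric.closedBall_mem_nhds l one_pos)] with x hx
        have : |g x - l| ≤ 1 := by simpa [Real.dist_eq] using hx
        have : |g x| ≤ |l| + 1 := by
          calc |g x| = |g x - l + l| := by ring_nf
            _ ≤ |g x - l| + |l| := abs_add_le _ _
            _ ≤ |l| + 1 := by linarith
        exact this.trans (le_max_right _ _)
      · filter_upwards [hright] with x hx using hx.trans (le_max_left _ _)
  choose C hC using key
  have hU : ∀ t ∈ Set.Icc (0:ℝ≥0) T, ∃ U : Set ℝ≥0,
      (∀ x ∈ U, |g x| ≤ C t) ∧ IsOpen U ∧ t ∈ U := by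
    intro t _
    exact eventually_nhds_iff.mp (hC t)
  choose U hU1 hU2 hU3 using hU
  obtain ⟨fin, hfin⟩ := isCompact_Icc.elim_nhds_subcover' (fun t ht => U t ht)
    (fun t ht => (hU2 t ht).mem_nhds (hU3 t ht))
  obtain ⟨M, hM⟩ := (fin.image (fun x => C x.1)).exists_le
  refine ⟨M, fun t ht => ?_⟩
  obtain ⟨x, hx, hxt⟩ := Set.mem_iUnion₂.mp (hfin ht)
  exact (hU1 x.1 x.2 t hxt).trans (hM _ (Finset.mem_image_of_mem _ hx))

/-- Let `X` be a progressively measurable càdlàg process taking values in an open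
interval `(a, b)` with `-∞ ≤ a < b ≤ +∞`, and let `f` be continuous on `(a, b)`.
If `X` is sticky, then `f(X)` is sticky. -/
theorem sticky_comp_continuousOn {Ω : Type*} {m : MeasurableSpace Ω}
    (𝓕 : MeasureTheory.Filtration ℝ≥0 m) (P : MeasureTheory.Measure Ω)
    [MeasureTheory.IsProbabilityMeasure P] [P.IsComplete]
    (hRC : ∀ t : ℝ≥0, (𝓕 t : MeasurableSpace Ω)
      = ⨅ s : ℝ≥0, ⨅ _ : t < s, (𝓕 s : MeasurableSpace Ω))
    (hNull : ∀ N : Set Ω, MeasurableSet N → P N = 0 → MeasurableSet[𝓕 0] N)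
    (a b : EReal) (hab : a < b)
    (X : ℝ≥0 → Ω → ℝ) (hprog : MeasureTheory.ProgMeasurable 𝓕 X) (hcadlag : IsCadlag X)
    (hmem : ∀ t : ℝ≥0, ∀ ω : Ω, a < (X t ω : EReal) ∧ (X t ω : EReal) < b)
    (f : ℝ → ℝ) (hf : ContinuousOn f {x : ℝ | a < (x : EReal) ∧ (x : EReal) < b})
    (hsticky : Sticky 𝓕 P X) :
    Sticky 𝓕 P (fun t ω => f (X t ω)) := by
  classical
  intro ε hε T hT τ hτ hpos
  set S : Set ℝ := {x : ℝ | a < (x : EReal) ∧ (x : EReal) < b} with hSdef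
  have hSopen : IsOpen S := by
    have : S = (fun x : ℝ => (x : EReal)) ⁻¹' (Set.Ioo a b) := rfl
    rw [this]
    exact isOpen_Ioo.preimage continuous_coe_real_ereal
  set V : Ω → ℝ := stoppedValue X (fun ω => (τ ω : WithTop ℝ≥0)) with hVdef
  have hVmem : ∀ ω, V ω ∈ S := fun ω => hmem (τ ω) ω
  -- countable cover of {τ < T} by events where V is in a good closed ball
  set I := {p : ℚ × ℕ // Metric.closedBall (p.1 : ℝ) (3 / (p.2 + 1)) ⊆ S} with hIdef
  set A : I → Set Ω :=
    fun p => {ω | τ ω < T} ∩ V ⁻¹' Metric.closedBall (p.1.1 : ℝ) (1 / (p.1.2 + 1)) with hAdef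
  have hcover : {ω | τ ω < T} ⊆ ⋃ p : I, A p := by
    intro ω hω
    obtain ⟨r, hr0, hball⟩ := Metric.isOpen_iff.mp hSopen _ (hVmem ω)
    obtain ⟨k, hk⟩ := exists_nat_gt (4 / r)
    have hk1 : (0:ℝ) < (k:ℝ) + 1 := by positivity
    have h4k : (4:ℝ) / ((k:ℝ) + 1) < r := by
      rw [div_lt_iff₀ hk1]
      have : 4 / r < (k:ℝ) := hk
      have h4 : (4:ℝ) < r * k := by
        rw [div_lt_iff₀ hr0] at this; linarith [this]
      nlinarith
    obtain ⟨q, hq⟩ := exists_rat_near (V ω) (show (0:ℝ) < 1 / ((k:ℝ)+1) by positivity)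
    have hqS : Metric.closedBall (q : ℝ) (3 / ((k:ℕ) + 1)) ⊆ S := by
      intro x hx
      apply hball
      rw [Metric.mem_ball]
      have h1 : dist x (q : ℝ) ≤ 3 / ((k:ℝ) + 1) := by
        simpa using Metric.mem_closedBall.mp hx
      have h2 : dist (q : ℝ) (V ω) < 1 / ((k:ℝ) + 1) := by
        rw [dist_comm, Real.dist_eq]; exact hq
      calc dist x (V ω) ≤ dist x (q:ℝ) + dist (q:ℝ) (V ω) := dist_triangle _ _ _
        _ < 3 / ((k:ℝ)+1) + 1 / ((k:ℝ)+1) := by linarith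
        _ = 4 / ((k:ℝ)+1) := by ring
        _ < r := h4k
    refine Set.mem_iUnion.mpr ⟨⟨(q, k), hqS⟩, hω, ?_⟩
    simp only [Set.mem_preimage, Metric.mem_closedBall]
    rw [Real.dist_eq]
    exact le_of_lt hq
  have hexists : ∃ p : I, 0 < P (A p) := by
    by_contra h
    push_neg at h
    have : P {ω | τ ω < T} = 0 := by
      refine le_antisymm ?_ zero_le
      calc P {ω | τ ω < T} ≤ P (⋃ p : I, A p) := measure_mono hcover
        _ = 0 := measure_iUnion_null (fun p => le_antisymm (h p) zero_le)
    exact absurd this hpos.ne'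
  obtain ⟨⟨⟨q, k⟩, hqk⟩, hApos⟩ := hexists
  have hk1 : (0:ℝ) < (k:ℝ) + 1 := by positivity
  set K := Metric.closedBall (q : ℝ) (1 / ((k:ℝ) + 1)) with hKdef
  set L := Metric.closedBall (q : ℝ) (3 / ((k:ℝ) + 1)) with hLdef
  have hLS : L ⊆ S := by
    have : (3 / ((k:ℕ) + 1) : ℝ) = 3 / ((k:ℝ) + 1) := by push_cast; ring
    rw [hLdef, ← this]; exact hqk
  have hKL : K ⊆ L := Metric.closedBall_subset_closedBall (by
    rw [div_le_div_iff₀ hk1 hk1]; nlinarith)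
  have hfL : UniformContinuousOn f L :=
    (isCompact_closedBall _ _).uniformContinuousOn_of_continuous (hf.mono hLS)
  obtain ⟨δ', hδ'0, hδ'⟩ := Metric.uniformContinuousOn_iff.mp hfL (ε / 2) (half_pos hε)
  set δ := min δ' (1 / ((k:ℝ) + 1)) with hδdef
  have hδ0 : 0 < δ := lt_min hδ'0 (by positivity)
  set A0 : Set Ω := {ω | τ ω < T} ∩ V ⁻¹' K with hA0def
  have hA0 : MeasurableSet[hτ.measurableSpace] A0 :=
    (by simpa only [WithTop.coe_lt_coe] using hτ.measurableSet_lt' T : MeasurableSet[hτ.measurableSpace] {ω | τ ω < T}).inter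
      ((measurable_stoppedValue hprog hτ) measurableSet_closedBall)
  set τ' : Ω → ℝ≥0 := A0.piecewise τ (fun _ => T) with hτ'def
  have hA0sub : A0 ⊆ {ω | τ ω < T} := Set.inter_subset_left
  have hτ' : IsStoppingTime 𝓕 (fun ω => (τ' ω : WithTop ℝ≥0)) := by
    intro i
    simp only [WithTop.coe_le_coe]
    by_cases hi : T ≤ i
    · have hset : {ω | τ' ω ≤ i} = (A0 ∩ {ω | τ ω ≤ i}) ∪ A0ᶜ := by
        ext ω
        by_cases hω : ω ∈ A0 <;>
          simp [hτ'def, Set.piecewise_eq_of_mem _ _ _, hω, Set.piecewise, hi]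
      rw [hset]
      have hA0i : MeasurableSet[𝓕 i] A0 := by
        have : A0 = A0 ∩ {ω | τ ω ≤ i} := by
          refine (Set.inter_eq_left.mpr ?_).symm
          exact fun ω hω => le_trans (le_of_lt (hA0sub hω)) hi
        rw [this]
        simpa only [WithTop.coe_le_coe] using hA0.2 i
      exact ((hA0i.inter (by simpa only [WithTop.coe_le_coe] using hτ i)).union hA0i.compl)
    · have hset : {ω | τ' ω ≤ i} = A0 ∩ {ω | τ ω ≤ i} := by
        ext ω
        by_cases hω : ω ∈ A0 <;>
          simp [hτ'def, Set.piecewise, hω, hi]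
      rw [hset]
      simpa only [WithTop.coe_le_coe] using hA0.2 i
  have hτ'lt : {ω | τ' ω < T} = A0 := by
    ext ω
    by_cases hω : ω ∈ A0
    · simp only [Set.mem_setOf_eq, hτ'def, Set.piecewise_eq_of_mem _ _ _ hω, hω, iff_true]
      exact hA0sub hω
    · simp [hτ'def, Set.piecewise_eq_of_notMem _ _ _ hω, hω]
  have hB := hsticky δ hδ0 T hT τ' hτ' (by rw [hτ'lt]; exact hApos)
  refine lt_of_lt_of_le hB (measure_mono ?_)
  rintro ω ⟨hsupδ, hωlt⟩
  have hωA : ω ∈ A0 := by rw [← hτ'lt]; exact hωlt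
  have hτ'eq : τ' ω = τ ω := Set.piecewise_eq_of_mem _ _ _ hωA
  have hτT : τ ω < T := hA0sub hωA
  have hVK : X (τ ω) ω ∈ K := hωA.2
  simp only [Set.mem_setOf_eq, hτ'eq] at hsupδ
  -- boundedness of the path
  obtain ⟨M, hM⟩ := cadlag_bddAbs (fun t => X t ω) (hcadlag ω).1 (hcadlag ω).2 T
  have hM0 : 0 ≤ M := le_trans (abs_nonneg _) (hM 0 ⟨le_refl _, zero_le⟩)
  have hbdd : BddAbove (Set.range fun t : ℝ≥0 =>
      ⨆ _ : t ∈ Set.Icc (τ ω) T, |X (τ ω) ω - X t ω|) := by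
    refine ⟨2 * M, ?_⟩
    rintro x ⟨t, rfl⟩
    refine Real.iSup_le (fun ht => ?_) (by linarith)
    have h1 : |X (τ ω) ω| ≤ M := hM _ ⟨zero_le, le_of_lt hτT⟩
    have h2 : |X t ω| ≤ M := hM _ ⟨zero_le, ht.2⟩
    calc |X (τ ω) ω - X t ω| ≤ |X (τ ω) ω| + |X t ω| := abs_sub _ _
      _ ≤ 2 * M := by linarith
  have hpt : ∀ t ∈ Set.Icc (τ ω) T, |X (τ ω) ω - X t ω| < δ := by
    intro t ht
    have : |X (τ ω) ω - X t ω| = ⨆ _ : t ∈ Set.Icc (τ ω) T, |X (τ ω) ω - X t ω| :=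
      (ciSup_pos (p := t ∈ Set.Icc (τ ω) T)
        (f := fun _ => |X (τ ω) ω - X t ω|) ht).symm
    rw [this]
    exact lt_of_le_of_lt (le_ciSup hbdd t) hsupδ
  -- membership in target set
  refine ⟨?_, hτT⟩
  simp only [Set.mem_setOf_eq]
  have hfpt : ∀ t ∈ Set.Icc (τ ω) T, |f (X (τ ω) ω) - f (X t ω)| ≤ ε / 2 := by
    intro t ht
    have hd := hpt t ht
    have hXtL : X t ω ∈ L := by
      rw [hLdef, Metric.mem_closedBall]
      have h1 : dist (X t ω) (X (τ ω) ω) < 1 / ((k:ℝ) + 1) := by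
        rw [dist_comm, Real.dist_eq]
        exact lt_of_lt_of_le hd (min_le_right _ _)
      have h2 : dist (X (τ ω) ω) (q : ℝ) ≤ 1 / ((k:ℝ) + 1) := Metric.mem_closedBall.mp hVK
      calc dist (X t ω) (q:ℝ) ≤ dist (X t ω) (X (τ ω) ω) + dist (X (τ ω) ω) (q:ℝ) :=
            dist_triangle _ _ _
        _ ≤ 1 / ((k:ℝ)+1) + 1 / ((k:ℝ)+1) := by linarith
        _ ≤ 3 / ((k:ℝ)+1) := by rw [← add_div, div_le_div_iff₀ hk1 hk1]; nlinarith
    have := hδ' _ (hKL hVK) _ hXtL (by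
      rw [Real.dist_eq]
      exact lt_of_lt_of_le hd (min_le_left _ _))
    rw [Real.dist_eq] at this
    exact le_of_lt this
  calc (⨆ t ∈ Set.Icc (τ ω) T, |f (X (τ ω) ω) - f (X t ω)|) ≤ ε / 2 := by
        refine Real.iSup_le (fun t => Real.iSup_le (fun ht => hfpt t ht) (by linarith)) (by linarith)
    _ < ε := by linarith
end

section
/- Let X be a progressively measurable càdlàg real-valued process on a filtered probability space satisfying the usual hypotheses, and let f : ℝ → ℝ be a continuous function. If X is sticky, then the process f(X) = (f(X_t))_{t≥0} is also sticky. -/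
open MeasureTheory Filter Set Topology
open scoped NNReal ENNReal

lemma cadlag_bounded_s5 (x : ℝ≥0 → ℝ)
    (hr : ∀ t : ℝ≥0, ContinuousWithinAt x (Set.Ici t) t)
    (hl : ∀ t : ℝ≥0, 0 < t → ∃ l : ℝ, Tendsto x (𝓝[Set.Iio t] t) (𝓝 l)) (T : ℝ≥0) :
    ∃ C : ℝ, ∀ u ∈ Set.Icc (0 : ℝ≥0) T, |x u| ≤ C := by
  have hK : IsCompact (Set.Icc (0 : ℝ≥0) T) := isCompact_Icc
  refine hK.induction_on (p := fun s => ∃ C : ℝ, ∀ u ∈ s, |x u| ≤ C) ⟨0, by simp⟩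
    (fun s t hst ⟨C, hC⟩ => ⟨C, fun u hu => hC u (hst hu)⟩)
    (fun s t ⟨C, hC⟩ ⟨D, hD⟩ => ⟨max C D, fun u hu => hu.elim
      (fun h => (hC u h).trans (le_max_left _ _))
      (fun h => (hD u h).trans (le_max_right _ _))⟩) ?_
  intro t ht
  have hright : ∀ᶠ s in 𝓝[Set.Ici t] t, |x s| ≤ |x t| + 1 := by
    have := (hr t).eventually (Metric.closedBall_mem_nhds (x t) one_pos)
    filter_upwards [this] with s hs
    have h1 : |x s - x t| ≤ 1 := by simpa [Real.dist_eq] using hs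
    have h2 := abs_sub_abs_le_abs_sub (x s) (x t)
    linarith
  have hleft : ∃ D : ℝ, ∀ᶠ s in 𝓝[Set.Iio t] t, |x s| ≤ D := by
    rcases eq_or_lt_of_le (zero_le : (0 : ℝ≥0) ≤ t) with h0 | h0
    · refine ⟨0, ?_⟩
      have he : Set.Iio t = (∅ : Set ℝ≥0) := by ext u; simp [← h0]
      rw [he, nhdsWithin_empty]
      exact Filter.eventually_bot
    · obtain ⟨l, hlt⟩ := hl t h0
      refine ⟨|l| + 1, ?_⟩
      have := hlt.eventually (Metric.closedBall_mem_nhds l one_pos)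
      filter_upwards [this] with s hs
      have h1 : |x s - l| ≤ 1 := by simpa [Real.dist_eq] using hs
      have h2 := abs_sub_abs_le_abs_sub (x s) l
      linarith
  obtain ⟨D, hD⟩ := hleft
  have hmem : ∀ᶠ s in 𝓝 t, |x s| ≤ max (|x t| + 1) D := by
    rw [← nhdsLT_sup_nhdsGE t, eventually_sup]
    constructor
    · filter_upwards [hD] with s hs using hs.trans (le_max_right _ _)
    · filter_upwards [hright] with s hs using hs.trans (le_max_left _ _)
  exact ⟨{s | |x s| ≤ max (|x t| + 1) D}, nhdsWithin_le_nhds hmem,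
    max (|x t| + 1) D, fun u hu => hu⟩


/-- If `X` is a progressively measurable càdlàg sticky process and `f : ℝ → ℝ` is
continuous, then `f(X)` is sticky. -/
theorem sticky_comp_continuous {Ω : Type*} {m : MeasurableSpace Ω}
    (𝓕 : MeasureTheory.Filtration ℝ≥0 m) (P : MeasureTheory.Measure Ω)
    [MeasureTheory.IsProbabilityMeasure P] [P.IsComplete]
    (hRC : ∀ t : ℝ≥0, (𝓕 t : MeasurableSpace Ω)
      = ⨅ s : ℝ≥0, ⨅ _ : t < s, (𝓕 s : MeasurableSpace Ω))
    (hNull : ∀ N : Set Ω, MeasurableSet N → P N = 0 → MeasurableSet[𝓕 0] N)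
    (X : ℝ≥0 → Ω → ℝ) (hprog : MeasureTheory.ProgMeasurable 𝓕 X) (hcadlag : IsCadlag X)
    (f : ℝ → ℝ) (hf : Continuous f) (hsticky : Sticky 𝓕 P X) :
    Sticky 𝓕 P (fun t ω => f (X t ω)) := by
  intro ε hε T hT τ hτ hpos
  set S : Ω → ℝ := MeasureTheory.stoppedValue X (fun ω => (τ ω : WithTop ℝ≥0)) with hSdef
  -- choose a bound M on |X_τ| with positive probability
  have hM : ∃ n : ℕ, 0 < P {ω | τ ω < T ∧ |S ω| ≤ n} := by
    by_contra h
    push_neg at h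
    have h0 : ∀ n : ℕ, P {ω | τ ω < T ∧ |S ω| ≤ n} = 0 :=
      fun n => le_antisymm (h n) zero_le
    have hunion : {ω | τ ω < T} ⊆ ⋃ n : ℕ, {ω | τ ω < T ∧ |S ω| ≤ n} := by
      intro ω hω
      obtain ⟨n, hn⟩ := exists_nat_ge (|S ω|)
      exact Set.mem_iUnion.2 ⟨n, hω, hn⟩
    have : P {ω | τ ω < T} = 0 :=
      le_antisymm ((measure_mono hunion).trans (measure_iUnion_null h0).le) zero_le
    exact absurd this (ne_of_gt hpos)
  obtain ⟨M, hMpos⟩ := hM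
  -- uniform continuity of f on a compact interval
  have hK : IsCompact (Set.Icc (-(M : ℝ) - 1) ((M : ℝ) + 1)) := isCompact_Icc
  have hUC := hK.uniformContinuousOn_of_continuous hf.continuousOn
  rw [Metric.uniformContinuousOn_iff] at hUC
  obtain ⟨δ, hδpos, hδε⟩ := hUC (ε / 2) (half_pos hε)
  set δ' : ℝ := min δ 1 with hδ'def
  have hδ'pos : 0 < δ' := lt_min hδpos one_pos
  -- modified stopping time
  set τ' : Ω → ℝ≥0 := fun ω => if τ ω < T ∧ |S ω| ≤ M then τ ω else T with hτ'def
  have hSmeas := MeasureTheory.measurable_stoppedValue (f := 𝓕) hprog hτ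
  have hAmeas : MeasurableSet[hτ.measurableSpace] {ω | |S ω| ≤ (M : ℝ)} := by
    have hset : {ω | |S ω| ≤ (M : ℝ)} = S ⁻¹' (Set.Icc (-(M : ℝ)) M) := by
      ext ω; simp [Set.mem_preimage, Set.mem_Icc, abs_le]
    rw [hset]
    exact hSmeas (measurableSet_Icc (a := -(M : ℝ)) (b := (M : ℝ)))
  have hτ' : MeasureTheory.IsStoppingTime 𝓕 (fun ω => (τ' ω : WithTop ℝ≥0)) := by
    intro t
    simp only [WithTop.coe_le_coe]
    by_cases htT : t < T
    · have heq : {ω | τ' ω ≤ t} = {ω | |S ω| ≤ (M : ℝ)} ∩ {ω | τ ω ≤ t} := by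
        ext ω
        simp only [Set.mem_setOf_eq, Set.mem_inter_iff, hτ'def]
        constructor
        · intro h
          by_cases hc : τ ω < T ∧ |S ω| ≤ (M : ℝ)
          · rw [if_pos hc] at h; exact ⟨hc.2, h⟩
          · rw [if_neg hc] at h; exact absurd (lt_of_le_of_lt h htT) (lt_irrefl T)
        · rintro ⟨h1, h2⟩
          rw [if_pos ⟨lt_of_le_of_lt h2 htT, h1⟩]; exact h2
      rw [heq]
      simpa only [WithTop.coe_le_coe] using ((hτ.measurableSet _).1 hAmeas).2 t
    · have heq : {ω | τ' ω ≤ t} = Set.univ := by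
        ext ω
        simp only [Set.mem_setOf_eq, Set.mem_univ, iff_true, hτ'def]
        split_ifs with hc
        · exact le_trans hc.1.le (not_lt.1 htT)
        · exact not_lt.1 htT
      rw [heq]; exact MeasurableSet.univ
  have hτ'lt : {ω | τ' ω < T} = {ω | τ ω < T ∧ |S ω| ≤ (M : ℝ)} := by
    ext ω
    simp only [Set.mem_setOf_eq, hτ'def]
    split_ifs with hc
    · exact ⟨fun h => hc, fun h => hc.1⟩
    · exact ⟨fun h => absurd h (lt_irrefl T), fun h => absurd h hc⟩
  have hpos' : 0 < P {ω | τ' ω < T} := by rw [hτ'lt]; exact hMpos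
  have key := hsticky δ' hδ'pos T hT τ' hτ' hpos'
  refine lt_of_lt_of_le key (measure_mono ?_)
  rintro ω ⟨h1, h2⟩
  have hA : τ ω < T ∧ |S ω| ≤ (M : ℝ) := by
    have : ω ∈ {ω | τ' ω < T} := h2
    rwa [hτ'lt] at this
  have hττ' : τ' ω = τ ω := if_pos hA
  rw [Set.mem_setOf_eq, hττ'] at h1
  -- boundedness of the path on [0, T]
  obtain ⟨C, hC⟩ := cadlag_bounded_s5 (fun s => X s ω) (hcadlag ω).1 (hcadlag ω).2 T
  have hXτ : X (τ ω) ω = S ω := rfl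
  have hτIcc : τ ω ∈ Set.Icc (0 : ℝ≥0) T := ⟨zero_le, hA.1.le⟩
  have hbdd : BddAbove (Set.range fun t : ℝ≥0 =>
      ⨆ _ : t ∈ Set.Icc (τ ω) T, |X (τ ω) ω - X t ω|) := by
    refine ⟨2 * C, Set.forall_mem_range.2 fun t => ?_⟩
    by_cases ht : t ∈ Set.Icc (τ ω) T
    · rw [ciSup_pos ht]
      have h1 := hC (τ ω) hτIcc
      have h2 := hC t ⟨zero_le, ht.2⟩
      have := abs_sub (X (τ ω) ω) (X t ω)
      calc |X (τ ω) ω - X t ω| ≤ |X (τ ω) ω| + |X t ω| := abs_sub _ _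
        _ ≤ 2 * C := by linarith
    · have he : IsEmpty (t ∈ Set.Icc (τ ω) T) := ⟨ht⟩
      rw [Real.iSup_of_isEmpty]
      have h1 := hC (τ ω) hτIcc
      have h0 : (0 : ℝ) ≤ |X (τ ω) ω| := abs_nonneg _
      linarith
  -- termwise bound from h1
  have hterm : ∀ t ∈ Set.Icc (τ ω) T, |X (τ ω) ω - X t ω| < δ' := by
    intro t ht
    have hle : (⨆ _ : t ∈ Set.Icc (τ ω) T, |X (τ ω) ω - X t ω|) ≤
        ⨆ t ∈ Set.Icc (τ ω) T, |X (τ ω) ω - X t ω| := le_ciSup hbdd t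
    rw [ciSup_pos ht] at hle
    exact lt_of_le_of_lt hle h1
  -- conclude
  refine ⟨?_, hA.1⟩
  rw [Set.mem_setOf_eq]
  have hbound : ∀ t ∈ Set.Icc (τ ω) T, |f (X (τ ω) ω) - f (X t ω)| ≤ ε / 2 := by
    intro t ht
    have hd := hterm t ht
    have haM : |X (τ ω) ω| ≤ (M : ℝ) := by rw [hXτ]; exact hA.2
    have haI : X (τ ω) ω ∈ Set.Icc (-(M : ℝ) - 1) ((M : ℝ) + 1) := by
      rw [Set.mem_Icc]
      rcases abs_le.1 haM with ⟨hl, hr⟩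
      constructor <;> linarith
    have hbI : X t ω ∈ Set.Icc (-(M : ℝ) - 1) ((M : ℝ) + 1) := by
      have h1' : |X (τ ω) ω - X t ω| ≤ 1 := hd.le.trans (min_le_right _ _)
      rcases abs_le.1 haM with ⟨hl, hr⟩
      rcases abs_le.1 h1' with ⟨hl2, hr2⟩
      rw [Set.mem_Icc]
      constructor <;> linarith
    have hdist : dist (X (τ ω) ω) (X t ω) < δ := by
      rw [Real.dist_eq]
      exact lt_of_lt_of_le hd (min_le_left _ _)
    have := hδε _ haI _ hbI hdist
    rw [Real.dist_eq] at this
    exact this.le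
  have hsup : (⨆ t ∈ Set.Icc (τ ω) T, |f (X (τ ω) ω) - f (X t ω)|) ≤ ε / 2 := by
    refine Real.iSup_le (fun t => Real.iSup_le (fun ht => hbound t ht) ?_) ?_ <;>
      exact (half_pos hε).le
  exact lt_of_le_of_lt hsup (half_lt_self hε)
end

section
/- Let X be a continuous process that is progressively measurable and sticky with respect to a filtration (F_t)_{t≥0} satisfying the usual hypotheses. Let (ν_t)_{t≥0} be a family of (F_t)-stopping times such that almost surely the map t ↦ ν_t is continuous and nondecreasing, ν_0 = 0, and ν_t is a.s. bounded for each t ≥ 0. Define the time-changed process X̃_t = X_{ν_t} and the time-changed filtration F̃_t = F_{ν_t}. Then X̃ is sticky with respect to the filtration (F̃_t)_{t≥0}. -/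
open MeasureTheory Filter Set Topology
open scoped NNReal ENNReal

lemma exists_q_btwn {a b : ℝ≥0} (h : a < b) :
    ∃ q : ℚ, a < Real.toNNReal q ∧ Real.toNNReal q < b := by
  obtain ⟨q, hq1, hq2⟩ := exists_rat_btwn (NNReal.coe_lt_coe.mpr h)
  have hq0 : (0:ℝ) ≤ (q:ℝ) := le_trans a.coe_nonneg hq1.le
  refine ⟨q, ?_, ?_⟩
  · rw [← NNReal.coe_lt_coe, Real.coe_toNNReal _ hq0]; exact hq1
  · rw [← NNReal.coe_lt_coe, Real.coe_toNNReal _ hq0]; exact hq2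

/-- Let `X` be a continuous, progressively measurable process that is sticky with respect
to the filtration `𝓕`, and let `(ν_t)` be a family of `𝓕`-stopping times such that a.s.
`t ↦ ν_t` is continuous and nondecreasing, `ν_0 = 0`, and each `ν_t` is a.s. bounded.
Then the time-changed process `X̃_t = X_{ν_t}` is sticky with respect to the time-changed
filtration `F̃_t = F_{ν_t}`. -/
theorem sticky_timeChange {Ω : Type*} {m : MeasurableSpace Ω}
    (𝓕 : MeasureTheory.Filtration ℝ≥0 m) (P : MeasureTheory.Measure Ω)
    [MeasureTheory.IsProbabilityMeasure P] [P.IsComplete]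
    (hRC : ∀ t : ℝ≥0, (𝓕 t : MeasurableSpace Ω)
      = ⨅ s : ℝ≥0, ⨅ _ : t < s, (𝓕 s : MeasurableSpace Ω))
    (hNull : ∀ N : Set Ω, MeasurableSet N → P N = 0 → MeasurableSet[𝓕 0] N)
    (X : ℝ≥0 → Ω → ℝ) (hprog : MeasureTheory.ProgMeasurable 𝓕 X)
    (hcont : ∀ ω : Ω, Continuous fun t => X t ω)
    (hsticky : Sticky 𝓕 P X)
    (ν : ℝ≥0 → Ω → ℝ≥0) (hν : ∀ t : ℝ≥0, MeasureTheory.IsStoppingTime 𝓕 (fun ω => (ν t ω : WithTop ℝ≥0)))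
    (hνreg : ∀ᵐ ω ∂P, Continuous (fun t => ν t ω) ∧ Monotone fun t => ν t ω)
    (hν0 : ∀ ω : Ω, ν 0 ω = 0)
    (hνbdd : ∀ t : ℝ≥0, ∃ C : ℝ≥0, ∀ᵐ ω ∂P, ν t ω ≤ C)
    (𝓖 : MeasureTheory.Filtration ℝ≥0 m)
    (h𝓖 : ∀ t : ℝ≥0, (𝓖 t : MeasurableSpace Ω) = (hν t).measurableSpace) :
    Sticky 𝓖 P (fun t ω => X (ν t ω) ω) := by
  classical
  intro ε hε T hT τ hτ hpos
  obtain ⟨C, hC⟩ := hνbdd T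
  set T' : ℝ≥0 := C + 1 with hT'def
  have hCT' : C < T' := lt_add_of_pos_right C one_pos
  have hT'pos : (0:ℝ≥0) < T' := lt_of_le_of_lt (zero_le : (0:ℝ≥0) ≤ C) hCT'
  -- the good set
  set G : Set Ω :=
    {ω | (Continuous fun t => ν t ω) ∧ (Monotone fun t => ν t ω) ∧ ν T ω ≤ C} with hGdef
  have hGae : ∀ᵐ ω ∂P, ω ∈ G := by
    filter_upwards [hνreg, hC] with ω h1 h2
    exact ⟨h1.1, h1.2, h2⟩
  have hGc : P Gᶜ = 0 := by
    have := ae_iff.mp hGae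
    simpa [Set.compl_def] using this
  have hGcm : MeasurableSet Gᶜ := measurableSet_of_null hGc
  have hGc𝓕 : MeasurableSet[𝓕 0] Gᶜ := hNull _ hGcm hGc
  -- the time-changed stopping time
  set σ : Ω → ℝ≥0 := fun ω => if τ ω < T then ν (τ ω) ω else T' with hσdef
  have hσ_of_lt : ∀ ω, τ ω < T → σ ω = ν (τ ω) ω := fun ω h => if_pos h
  have hσ_of_ge : ∀ ω, ¬ τ ω < T → σ ω = T' := fun ω h => if_neg h
  -- measurability of {σ < s}
  have hσlt : ∀ s : ℝ≥0, MeasurableSet[𝓕 s] {ω | σ ω < s} := by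
    intro s
    have hpiece : ∀ q r : ℚ, Real.toNNReal r < s → MeasurableSet[𝓕 s]
        ({ω | τ ω ≤ Real.toNNReal q} ∩ {ω | ν (Real.toNNReal q) ω ≤ Real.toNNReal r}) := by
      intro q r hr
      have h1 : MeasurableSet[𝓖 (Real.toNNReal q)] {ω | τ ω ≤ Real.toNNReal q} := by
        simpa only [WithTop.coe_le_coe] using hτ (Real.toNNReal q)
      rw [h𝓖] at h1
      exact 𝓕.mono hr.le _ (by
        simpa only [WithTop.coe_le_coe] using (((hν _).measurableSet _).mp h1).2 (Real.toNNReal r))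
    set U : Set Ω := ⋃ (q : ℚ) (_ : Real.toNNReal q < T) (r : ℚ) (_ : Real.toNNReal r < s),
        ({ω | τ ω ≤ Real.toNNReal q} ∩ {ω | ν (Real.toNNReal q) ω ≤ Real.toNNReal r})
      with hUdef
    have hU : MeasurableSet[𝓕 s] U := by
      refine MeasurableSet.iUnion fun q => MeasurableSet.iUnion fun _ =>
        MeasurableSet.iUnion fun r => MeasurableSet.iUnion fun hr => hpiece q r hr
    have hW : MeasurableSet[𝓕 C] ({ω | τ ω < T}ᶜ ∩ {ω | ν T ω ≤ C}) := by
      have h1 : MeasurableSet[𝓖 T] {ω | τ ω < T} := by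
        simpa only [WithTop.coe_lt_coe] using hτ.measurableSet_lt T
      rw [h𝓖] at h1
      simpa only [WithTop.coe_le_coe] using (((hν T).measurableSet _).mp h1.compl).2 C
    set V : Set Ω :=
      U ∪ (if T' < s then ({ω | τ ω < T}ᶜ ∩ {ω | ν T ω ≤ C}) else (∅ : Set Ω)) with hVdef
    have hV : MeasurableSet[𝓕 s] V := by
      refine hU.union ?_
      split_ifs with h
      · exact 𝓕.mono (le_of_lt (lt_trans hCT' h)) _ hW
      · exact @MeasurableSet.empty _ (𝓕 s)
    -- forward direction on the good set
    have hfwd : ∀ ω ∈ G, τ ω < T → ν (τ ω) ω < s → ω ∈ U := by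
      intro ω hωG hτT hνs
      obtain ⟨hcν, hmν, -⟩ := hωG
      have h1 : {t : ℝ≥0 | ν t ω < s} ∈ 𝓝 (τ ω) :=
        (isOpen_lt hcν continuous_const).mem_nhds hνs
      have h2 : Set.Iio T ∈ 𝓝 (τ ω) := isOpen_Iio.mem_nhds hτT
      have h3 : ({t : ℝ≥0 | ν t ω < s} ∩ Set.Iio T) ∩ Set.Ioi (τ ω) ∈ 𝓝[>] (τ ω) :=
        Filter.inter_mem (nhdsWithin_le_nhds (Filter.inter_mem h1 h2)) self_mem_nhdsWithin
      obtain ⟨t0, ⟨hts, htT⟩, htτ⟩ := Filter.nonempty_of_mem h3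
      obtain ⟨q, hq1, hq2⟩ := exists_q_btwn htτ
      obtain ⟨r, hr1, hr2⟩ := exists_q_btwn (lt_of_le_of_lt (hmν hq2.le) hts)
      simp only [hUdef, Set.mem_iUnion, Set.mem_inter_iff, Set.mem_setOf_eq]
      exact ⟨q, lt_trans hq2 htT, r, hr2, hq1.le, hr1.le⟩
    have hbwd : ∀ ω ∈ G, ω ∈ U → τ ω < T ∧ ν (τ ω) ω < s := by
      intro ω hωG hωU
      obtain ⟨-, hmν, -⟩ := hωG
      simp only [hUdef, Set.mem_iUnion, Set.mem_inter_iff, Set.mem_setOf_eq] at hωU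
      obtain ⟨q, hqT, r, hrs, hτq, hνq⟩ := hωU
      exact ⟨lt_of_le_of_lt hτq hqT, lt_of_le_of_lt (le_trans (hmν hτq) hνq) hrs⟩
    -- split the set
    have hEq : {ω | σ ω < s} = ({ω | σ ω < s} ∩ Gᶜ) ∪ (V ∩ G) := by
      ext ω
      constructor
      · intro h
        by_cases hG : ω ∈ G
        · refine Or.inr ⟨?_, hG⟩
          by_cases hτT : τ ω < T
          · exact Or.inl (hfwd ω hG hτT ((hσ_of_lt ω hτT) ▸ h))
          · have hσT : σ ω = T' := hσ_of_ge ω hτT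
            refine Or.inr ?_
            rw [if_pos (hσT ▸ h : T' < s)]
            exact ⟨hτT, hG.2.2⟩
        · exact Or.inl ⟨h, hG⟩
      · rintro (⟨h, -⟩ | ⟨hV', hG⟩)
        · exact h
        · rcases hV' with hωU | hωW
          · obtain ⟨h1, h2⟩ := hbwd ω hG hωU
            show σ ω < s
            rw [hσ_of_lt ω h1]; exact h2
          · by_cases hs : T' < s
            · rw [if_pos hs] at hωW
              show σ ω < s
              rw [hσ_of_ge ω hωW.1]; exact hs
            · rw [if_neg hs] at hωW
              exact absurd hωW (Set.notMem_empty ω)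
    rw [hEq]
    have hnull' : MeasurableSet[𝓕 s] ({ω | σ ω < s} ∩ Gᶜ) := by
      have h0 : P ({ω | σ ω < s} ∩ Gᶜ) = 0 := measure_mono_null Set.inter_subset_right hGc
      exact 𝓕.mono (zero_le : (0:ℝ≥0) ≤ s) _ (hNull _ (measurableSet_of_null h0) h0)
    have hVG : MeasurableSet[𝓕 s] (V ∩ G) := by
      have heq : V ∩ G = V \ Gᶜ := Set.diff_compl.symm
      rw [heq]
      exact hV.diff (𝓕.mono (zero_le : (0:ℝ≥0) ≤ s) _ hGc𝓕)
    exact hnull'.union hVG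
  -- σ is a stopping time, by right-continuity of the filtration
  have hσstop : IsStoppingTime 𝓕 (fun ω => (σ ω : WithTop ℝ≥0)) := by
    intro s
    simp only [WithTop.coe_le_coe]
    have hgoal : MeasurableSet[⨅ (s' : ℝ≥0) (_ : s < s'), (𝓕 s' : MeasurableSpace Ω)]
        {ω | σ ω ≤ s} := by
      rw [MeasurableSpace.measurableSet_iInf]
      intro s'
      rw [MeasurableSpace.measurableSet_iInf]
      intro hss'
      have hset : {ω | σ ω ≤ s} = ⋂ (q : ℚ)
          (_ : s < Real.toNNReal q ∧ Real.toNNReal q < s'), {ω | σ ω < Real.toNNReal q} := by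
        ext ω
        simp only [Set.mem_iInter, Set.mem_setOf_eq]
        constructor
        · rintro h q ⟨hq1, -⟩; exact lt_of_le_of_lt h hq1
        · intro h
          by_contra hc
          push_neg at hc
          obtain ⟨q, hq1, hq2⟩ := exists_q_btwn (lt_min hc hss')
          exact absurd (h q ⟨hq1, lt_of_lt_of_le hq2 (min_le_right _ _)⟩)
            (not_lt.mpr (le_of_lt (lt_of_lt_of_le hq2 (min_le_left _ _)))).elim
      rw [hset]
      exact MeasurableSet.iInter fun q => MeasurableSet.iInter fun hq =>
        𝓕.mono hq.2.le _ (hσlt (Real.toNNReal q))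
    rw [← hRC s] at hgoal
    exact hgoal
  -- positivity of P(σ < T')
  have hposσ : 0 < P {ω | σ ω < T'} := by
    have hsub : {ω | τ ω < T} ⊆ {ω | σ ω < T'} ∪ Gᶜ := by
      intro ω hω
      by_cases hG : ω ∈ G
      · left
        show σ ω < T'
        rw [hσ_of_lt ω hω]
        exact lt_of_le_of_lt (le_trans (hG.2.1 hω.le) hG.2.2) hCT'
      · exact Or.inr hG
    calc (0:ℝ≥0∞) < P {ω | τ ω < T} := hpos
      _ ≤ P ({ω | σ ω < T'} ∪ Gᶜ) := measure_mono hsub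
      _ ≤ P {ω | σ ω < T'} + P Gᶜ := measure_union_le _ _
      _ = P {ω | σ ω < T'} := by rw [hGc, add_zero]
  have hmain := hsticky ε hε T' hT'pos σ hσstop hposσ
  -- transfer to the target event
  have hsub2 : ({ω | (⨆ u ∈ Set.Icc (σ ω) T', |X (σ ω) ω - X u ω|) < ε} ∩ {ω | σ ω < T'})
      ⊆ ({ω | (⨆ t ∈ Set.Icc (τ ω) T, |X (ν (τ ω) ω) ω - X (ν t ω) ω|) < ε}
          ∩ {ω | τ ω < T}) ∪ Gᶜ := by
    rintro ω ⟨hA, hσT'⟩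
    by_cases hG : ω ∈ G
    · left
      obtain ⟨hcν, hmν, hνTC⟩ := hG
      have hτT : τ ω < T := by
        by_contra h
        rw [Set.mem_setOf_eq, hσ_of_ge ω h] at hσT'
        exact lt_irrefl _ hσT'
      have hσν : σ ω = ν (τ ω) ω := hσ_of_lt ω hτT
      refine ⟨?_, hτT⟩
      rw [Set.mem_setOf_eq] at hA ⊢
      set g : ℝ≥0 → ℝ := fun u => |X (σ ω) ω - X u ω| with hgdef
      have hgc : Continuous g := (continuous_const.sub (hcont ω)).abs
      have hne : (Set.Icc (σ ω) T').Nonempty := ⟨σ ω, le_refl _, (hσT' : σ ω < T').le⟩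
      obtain ⟨x, hx, hxmax⟩ := isCompact_Icc.exists_isMaxOn hne hgc.continuousOn
      have hM0 : (0:ℝ) ≤ g x := abs_nonneg _
      have hh : ∀ u : ℝ≥0, (⨆ _ : u ∈ Set.Icc (σ ω) T', g u) ≤ g x := by
        intro u
        by_cases hu : u ∈ Set.Icc (σ ω) T'
        · rw [ciSup_pos hu]; exact hxmax hu
        · haveI : IsEmpty (u ∈ Set.Icc (σ ω) T') := ⟨hu⟩
          rw [Real.iSup_of_isEmpty]; exact hM0
      have hBdd : BddAbove (Set.range fun u => ⨆ _ : u ∈ Set.Icc (σ ω) T', g u) := by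
        refine ⟨g x, ?_⟩
        rintro y ⟨u, rfl⟩
        exact hh u
      have hle : ∀ u ∈ Set.Icc (σ ω) T', g u ≤ ⨆ u, ⨆ _ : u ∈ Set.Icc (σ ω) T', g u := by
        intro u hu
        calc g u = ⨆ _ : u ∈ Set.Icc (σ ω) T', g u := (ciSup_pos (f := fun _ => g u) hu).symm
          _ ≤ _ := le_ciSup hBdd u
      have hS0 : (0:ℝ) ≤ ⨆ u, ⨆ _ : u ∈ Set.Icc (σ ω) T', g u := by
        have h1 := hle (σ ω) ⟨le_refl _, (hσT' : σ ω < T').le⟩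
        have h2 : g (σ ω) = 0 := by simp [hgdef]
        linarith
      have hfin : (⨆ t ∈ Set.Icc (τ ω) T, |X (ν (τ ω) ω) ω - X (ν t ω) ω|)
          ≤ ⨆ u, ⨆ _ : u ∈ Set.Icc (σ ω) T', g u := by
        refine Real.iSup_le (fun t => Real.iSup_le (fun ht => ?_) hS0) hS0
        have hmem : ν t ω ∈ Set.Icc (σ ω) T' := by
          constructor
          · rw [hσν]; exact hmν ht.1
          · exact le_trans (le_trans (hmν ht.2) hνTC) hCT'.le
        have := hle (ν t ω) hmem
        rw [← hσν]
        exact this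
      exact lt_of_le_of_lt hfin hA
    · exact Or.inr hG
  have hfinal : 0 < P ({ω | (⨆ t ∈ Set.Icc (τ ω) T, |X (ν (τ ω) ω) ω - X (ν t ω) ω|) < ε}
      ∩ {ω | τ ω < T}) := by
    calc (0:ℝ≥0∞) < _ := hmain
      _ ≤ P (({ω | (⨆ t ∈ Set.Icc (τ ω) T, |X (ν (τ ω) ω) ω - X (ν t ω) ω|) < ε}
          ∩ {ω | τ ω < T}) ∪ Gᶜ) := measure_mono hsub2
      _ ≤ _ + P Gᶜ := measure_union_le _ _
      _ = _ := by rw [hGc, add_zero]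
  exact hfinal
end
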